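/- For every hash sequence of n cars on m places with 1 ≤ n < m, and every k ∈ {1,…,m−1}: the place V + k (taken modulo m) is empty at the end of the parking process if and only if −C has a strict record at V + k, i.e. if and only if C_{V+k} < C_{V+j} for every j with 0 ≤ j ≤ k−1. -/

import Mathlib

open MeasureTheory Filter
open scoped BigOperators

attribute [local instance] Classical.propDecidable

namespace Parking

variable {m : ℕ}

/-- Final parking spot of a car whose first try is place `s`, given the set `occ`
of currently occupied places (places are cyclic, i.e. elements of `ZMod m`). -/
noncomputable def spot (occ : Finset (ZMod m)) (s : ZMod m) : ZMod m :=
  if h : ∃ t : ℕ, s + (t : ZMod m) ∉ occ then s + ((Nat.find h : ℕ) : ZMod m) else s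

/-- Set of occupied places after the first `k` cars of the hash sequence `p` have parked. -/
noncomputable def occs (p : ℕ → ZMod m) : ℕ → Finset (ZMod m)
  | 0 => ∅
  | k + 1 => insert (spot (occs p k) (p k)) (occs p k)

/-- Number of consecutive occupied places starting at `x` (0 if `x` is empty). -/
noncomputable def runLen (occ : Finset (ZMod m)) (x : ZMod m) : ℕ :=
  if h : ∃ t : ℕ, x + (t : ZMod m) ∉ occ then Nat.find h else 0

/-- First place of the block of consecutive occupied places containing `x`. -/
noncomputable def blockStart (occ : Finset (ZMod m)) (x : ZMod m) : ZMod m :=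
  if h : ∃ t : ℕ, x - ((t : ZMod m) + 1) ∉ occ then x - ((Nat.find h : ℕ) : ZMod m) else x

/-- Starting places of the blocks of consecutive occupied places. -/
noncomputable def blockStarts (occ : Finset (ZMod m)) : Finset (ZMod m) :=
  occ.filter (fun x => x - 1 ∉ occ)

/-- The multiset of sizes of the blocks of consecutive occupied places. -/
noncomputable def blockSizes (occ : Finset (ZMod m)) : Multiset ℕ :=
  (blockStarts occ).val.map (runLen occ)

/-- `B n p k` : size of the `k`-th largest block (1-indexed, `0` if there are fewer
than `k` blocks) once the `n` first cars of the hash sequence `p` have parked. -/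
noncomputable def B (n : ℕ) (p : ℕ → ZMod m) (k : ℕ) : ℕ :=
  ((Multiset.sort (blockSizes (occs p n)) (· ≤ ·)).reverse).getD (k - 1) 0

/-- `R n p k` : size of the `k`-th block (1-indexed, `0` if there are fewer than `k`
blocks), blocks being sorted by increasing date of birth (increasing order of the first
arrival of a car of the block), once the `n` first cars of `p` have parked. -/
noncomputable def R (n : ℕ) (p : ℕ → ZMod m) (k : ℕ) : ℕ :=
  (((((List.range n).map
        (fun i => blockStart (occs p n) (spot (occs p i) (p i)))).reverse.dedup).reverse).map
      (runLen (occs p n))).getD (k - 1) 0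

/-- Number of places tried by car `i` beyond its first try. -/
noncomputable def offs (p : ℕ → ZMod m) (i : ℕ) : ℕ :=
  if h : ∃ t : ℕ, p i + (t : ZMod m) ∉ occs p i then Nat.find h else 0

/-- `H n p y` : number of cars among the `n` first cars of `p` that tried place `y`,
successfully or not. -/
noncomputable def H (n : ℕ) (p : ℕ → ZMod m) (y : ZMod m) : ℕ :=
  ((Finset.range n).filter (fun i => ∃ t : ℕ, t ≤ offs p i ∧ p i + (t : ZMod m) = y)).card

/-- `Y n p k` : number of cars whose first try is place `k` (periodic in `k`). -/
noncomputable def Y (n : ℕ) (p : ℕ → ZMod m) (k : ℤ) : ℕ :=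
  ((Finset.range n).filter (fun i => p i = (k : ZMod m))).card

/-- `A n p k = Y₁ + ⋯ + Y_k - k n / m`. -/
noncomputable def A (n : ℕ) (p : ℕ → ZMod m) (k : ℕ) : ℝ :=
  (∑ j ∈ Finset.range k, (Y n p (j + 1) : ℝ)) - (k : ℝ) * n / m

/-- `V n p` : the smallest `j ∈ {1, …, m}` at which `A` attains its minimum over `{1, …, m}`. -/
noncomputable def V (n : ℕ) (p : ℕ → ZMod m) : ℕ :=
  sInf {j | 1 ≤ j ∧ j ≤ m ∧ ∀ i, 1 ≤ i → i ≤ m → A n p j ≤ A n p i}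

/-- `C n p k = Y₁ + ⋯ + Y_k - k` for `0 ≤ k ≤ m`, extended to `ℤ` by `C (k + m) = C k - ℓ`. -/
noncomputable def C (n : ℕ) (p : ℕ → ZMod m) (k : ℤ) : ℤ :=
  ((∑ j ∈ Finset.range (k.emod m).toNat, (Y n p (j + 1) : ℤ)) - ((k.emod m).toNat : ℤ))
    - k.ediv m * ((m : ℤ) - (n : ℤ))

/-- Extension of a hash sequence `Fin n → Fin m` to a map `ℕ → ZMod m`. -/
def ext (m n : ℕ) (p : Fin n → Fin m) : ℕ → ZMod m :=
  fun i => if h : i < n then (((p ⟨i, h⟩) : ℕ) : ZMod m) else 0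

/-- Probability of an event under the uniform distribution on the `m ^ n` hash sequences. -/
noncomputable def parkProb (m n : ℕ) (ev : (ℕ → ZMod m) → Prop) : ℝ :=
  ((Finset.univ.filter (fun p : Fin n → Fin m => ev (ext m n p))).card : ℝ) / (m : ℝ) ^ n

/-- Expectation of a random variable under the uniform distribution on hash sequences. -/
noncomputable def parkExp (m n : ℕ) (X : (ℕ → ZMod m) → ℝ) : ℝ :=
  (∑ p : Fin n → Fin m, X (ext m n p)) / (m : ℝ) ^ n

/-- `φ(M,N,K) = binom(N−1,K−1) (K+1)^{K−1} M (M−K−1)^{N−K−1} (M−N−1) / M^N`. -/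
noncomputable def phi (M N K : ℕ) : ℝ :=
  (Nat.choose (N - 1) (K - 1) : ℝ) * ((K : ℝ) + 1) ^ (K - 1) * (M : ℝ)
      * ((M - K - 1 : ℕ) : ℝ) ^ (N - K - 1) * ((M - N - 1 : ℕ) : ℝ) / (M : ℝ) ^ N

/-- The density `f(λ,x) = (λ/√(2π)) x^{−1/2} (1−x)^{−3/2} exp(−λ²x/(2(1−x)))` on `(0,1)`. -/
noncomputable def fdens (l x : ℝ) : ℝ :=
  if 0 < x ∧ x < 1 then
    l / Real.sqrt (2 * Real.pi) * x ^ (-(1 : ℝ) / 2) * (1 - x) ^ (-(3 : ℝ) / 2)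
      * Real.exp (-(l ^ 2 * x) / (2 * (1 - x)))
  else 0


lemma cast_inj' (hm : 0 < m) {a b : ℕ} (ha : a < m) (hb : b < m)
    (h : (a : ZMod m) = b) : a = b := by
  haveI : NeZero m := ⟨hm.ne'⟩
  have := congrArg ZMod.val h
  rwa [ZMod.val_natCast_of_lt ha, ZMod.val_natCast_of_lt hb] at this

lemma exists_gap (hm : 0 < m) {occ : Finset (ZMod m)} (h : occ.card < m) (s : ZMod m) :
    ∃ t : ℕ, s + (t : ZMod m) ∉ occ := by
  haveI : NeZero m := ⟨hm.ne'⟩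
  obtain ⟨e, he⟩ : ∃ e, e ∉ occ := by
    by_contra hc; push_neg at hc
    have hsub : Finset.univ ⊆ occ := fun e _ => hc e
    have := Finset.card_le_card hsub
    rw [Finset.card_univ, ZMod.card] at this; omega
  refine ⟨(e - s).val, ?_⟩
  rw [ZMod.natCast_val, ZMod.cast_id]
  rwa [add_comm, sub_add_cancel]

lemma spot_spec (hm : 0 < m) {occ : Finset (ZMod m)} (h : occ.card < m) (s : ZMod m) :
    spot occ s ∉ occ := by
  rw [spot, dif_pos (exists_gap hm h s)]
  exact Nat.find_spec (exists_gap hm h s)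

lemma occs_subset (p : ℕ → ZMod m) {i j : ℕ} (h : i ≤ j) : occs p i ⊆ occs p j := by
  induction j with
  | zero => rw [Nat.le_zero.mp h]
  | succ j ih =>
    rcases Nat.lt_or_ge i (j+1) with h' | h'
    · exact (ih (by omega)).trans (by rw [occs]; exact Finset.subset_insert _ _)
    · have : i = j + 1 := by omega
      rw [this]

lemma occs_card (hm : 0 < m) (p : ℕ → ZMod m) : ∀ k, k ≤ m → (occs p k).card = k := by
  intro k
  induction k with
  | zero => intro; simp [occs]
  | succ k ih =>
    intro hk
    have hc : (occs p k).card = k := ih (by omega)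
    have hlt : (occs p k).card < m := by omega
    rw [occs, Finset.card_insert_of_notMem (spot_spec hm hlt (p k)), hc]

lemma mem_occs (p : ℕ → ZMod m) {k : ℕ} {y : ZMod m} :
    y ∈ occs p k ↔ ∃ i < k, spot (occs p i) (p i) = y := by
  induction k with
  | zero => simp [occs]
  | succ k ih =>
    rw [occs, Finset.mem_insert, ih]
    constructor
    · rintro (h | ⟨i, hi, h⟩)
      exacts [⟨k, by omega, h.symm⟩, ⟨i, by omega, h⟩]
    · rintro ⟨i, hi, h⟩
      rcases Nat.lt_or_ge i k with h' | h'
      · exact Or.inr ⟨i, h', h⟩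
      · have : i = k := by omega
        subst this; exact Or.inl h.symm

lemma offs_spec {n : ℕ} (hnm : n < m) (p : ℕ → ZMod m) {i : ℕ} (hi : i < n) :
    spot (occs p i) (p i) = p i + ((offs p i : ℕ) : ZMod m)
    ∧ p i + ((offs p i : ℕ) : ZMod m) ∉ occs p i
    ∧ (∀ t < offs p i, p i + (t : ZMod m) ∈ occs p i)
    ∧ offs p i ≤ i := by
  have hm : 0 < m := by omega
  have hc : (occs p i).card = i := occs_card hm p i (by omega)
  have hex : ∃ t : ℕ, p i + (t : ZMod m) ∉ occs p i := exists_gap hm (by omega) (p i)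
  have hoffs : offs p i = Nat.find hex := by rw [offs, dif_pos hex]
  have hle : offs p i ≤ i := by
    obtain ⟨t, ht, hfree⟩ : ∃ t, t ≤ i ∧ p i + (t : ZMod m) ∉ occs p i := by
      by_contra hcon; push_neg at hcon
      have hsub : (Finset.range (i+1)).image (fun t : ℕ => p i + (t : ZMod m)) ⊆ occs p i := by
        intro y hy
        simp only [Finset.mem_image, Finset.mem_range] at hy
        obtain ⟨t, ht, rfl⟩ := hy
        exact hcon t (by omega)
      have hinj : Set.InjOn (fun t : ℕ => p i + (t : ZMod m)) (Finset.range (i+1)) := by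
        intro a ha b hb hab
        simp only [Finset.coe_range, Set.mem_Iio] at ha hb
        exact cast_inj' hm (by omega) (by omega) (by simpa using hab)
      have := Finset.card_le_card hsub
      rw [Finset.card_image_of_injOn hinj, Finset.card_range] at this
      omega
    rw [hoffs]; exact (Nat.find_min' hex hfree).trans ht
  refine ⟨?_, ?_, ?_, hle⟩
  · rw [spot, dif_pos hex, hoffs]
  · rw [hoffs]; exact Nat.find_spec hex
  · intro t ht
    rw [hoffs] at ht
    have := Nat.find_min hex ht
    simpa using this


lemma tries_mem_occs {n : ℕ} (hnm : n < m) {p : ℕ → ZMod m} {i t : ℕ} {y : ZMod m}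
    (hi : i < n) (ht : t ≤ offs p i) (hy : p i + (t : ZMod m) = y) : y ∈ occs p n := by
  obtain ⟨hs, hns, hall, hle⟩ := offs_spec hnm p hi
  rcases Nat.lt_or_ge t (offs p i) with h | h
  · exact occs_subset p (le_of_lt hi) (hy ▸ hall t h)
  · have htt : t = offs p i := le_antisymm ht h
    subst htt
    have hmem : spot (occs p i) (p i) ∈ occs p (i+1) := by
      rw [occs]; exact Finset.mem_insert_self _ _
    rw [hs, hy] at hmem
    exact occs_subset p hi hmem

lemma H_eq_zero_iff {n : ℕ} (hnm : n < m) (p : ℕ → ZMod m) (y : ZMod m) :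
    H n p y = 0 ↔ y ∉ occs p n := by
  rw [H, Finset.card_eq_zero, Finset.filter_eq_empty_iff]
  constructor
  · intro h hy
    obtain ⟨i, hi, hspot⟩ := (mem_occs p).mp hy
    obtain ⟨hs, -, -, -⟩ := offs_spec hnm p hi
    exact h (Finset.mem_range.mpr hi) ⟨offs p i, le_refl _, by rw [← hs, hspot]⟩
  · rintro h i hi ⟨t, ht, hy⟩
    exact h (tries_mem_occs hnm (Finset.mem_range.mp hi) ht hy)

lemma spot_ne {n : ℕ} (hnm : n < m) (p : ℕ → ZMod m) {i j : ℕ} (hi : i < n) (hj : j < n)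
    (hij : i < j) : spot (occs p i) (p i) ≠ spot (occs p j) (p j) := by
  have hm : 0 < m := by omega
  have h1 : spot (occs p i) (p i) ∈ occs p j := by
    have : spot (occs p i) (p i) ∈ occs p (i+1) := by
      rw [occs]; exact Finset.mem_insert_self _ _
    exact occs_subset p (by omega) this
  have h2 : spot (occs p j) (p j) ∉ occs p j :=
    spot_spec hm (by rw [occs_card hm p j (by omega)]; omega) (p j)
  intro h
  exact h2 (h ▸ h1)

lemma parked_card {n : ℕ} (hnm : n < m) (p : ℕ → ZMod m) (y : ZMod m) :
    ((Finset.range n).filter (fun i => spot (occs p i) (p i) = y)).card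
      = if y ∈ occs p n then 1 else 0 := by
  split_ifs with h
  · obtain ⟨i, hi, hspot⟩ := (mem_occs p).mp h
    rw [Finset.card_eq_one]
    refine ⟨i, Finset.eq_singleton_iff_unique_mem.mpr ⟨?_, ?_⟩⟩
    · simp only [Finset.mem_filter, Finset.mem_range]; exact ⟨hi, hspot⟩
    · intro j hj
      simp only [Finset.mem_filter, Finset.mem_range] at hj
      by_contra hne
      rcases Nat.lt_or_ge j i with h' | h'
      · exact spot_ne hnm p hj.1 hi h' (hj.2.trans hspot.symm)
      · exact spot_ne hnm p hi hj.1 (by omega) (hspot.trans hj.2.symm)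
  · rw [Finset.card_eq_zero, Finset.filter_eq_empty_iff]
    intro i hi hspot
    exact h ((mem_occs p).mpr ⟨i, Finset.mem_range.mp hi, hspot⟩)


lemma H_succ {n : ℕ} (hnm : n < m) (p : ℕ → ZMod m) (y : ZMod m) :
    H n p (y + 1) = ((Finset.range n).filter (fun i => p i = y + 1)).card + (H n p y - 1) := by
  have hm : 0 < m := by omega
  -- Step A : rewrite the filter for H (y+1)
  have key : ∀ i ∈ Finset.range n,
      ((∃ t : ℕ, t ≤ offs p i ∧ p i + (t : ZMod m) = y + 1) ↔
        (p i = y + 1 ∨ ((∃ t : ℕ, t ≤ offs p i ∧ p i + (t : ZMod m) = y)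
          ∧ ¬ spot (occs p i) (p i) = y))) := by
    intro i hi
    rw [Finset.mem_range] at hi
    obtain ⟨hs, hns, hall, hle⟩ := offs_spec hnm p hi
    constructor
    · rintro ⟨t, ht, heq⟩
      cases t with
      | zero => left; simpa using heq
      | succ t' =>
        right
        have h1 : p i + (t' : ZMod m) = y := by
          have h2 : (p i + (t' : ZMod m)) + 1 = y + 1 := by
            rw [← heq]; push_cast; ring
          exact add_right_cancel h2
        refine ⟨⟨t', by omega, h1⟩, ?_⟩
        rw [hs]
        intro hcontra
        have h3 : ((offs p i : ℕ) : ZMod m) = (t' : ZMod m) :=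
          add_left_cancel (hcontra.trans h1.symm)
        have := cast_inj' hm (by omega) (by omega) h3
        omega
    · rintro (hp | ⟨⟨t, ht, hty⟩, hne⟩)
      · exact ⟨0, Nat.zero_le _, by simpa using hp⟩
      · have htO : t ≠ offs p i := by
          intro h; subst h; exact hne (by rw [hs, hty])
        refine ⟨t + 1, by omega, ?_⟩
        push_cast
        rw [← add_assoc, hty]
  have disj : ∀ i ∈ Finset.range n, ¬ (p i = y + 1 ∧
      ((∃ t : ℕ, t ≤ offs p i ∧ p i + (t : ZMod m) = y)
        ∧ ¬ spot (occs p i) (p i) = y)) := by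
    rintro i hi ⟨hp, ⟨t, ht, hty⟩, -⟩
    rw [Finset.mem_range] at hi
    obtain ⟨-, -, -, hle⟩ := offs_spec hnm p hi
    rw [hp] at hty
    have h1 : y + ((t + 1 : ℕ) : ZMod m) = y + ((0 : ℕ) : ZMod m) := by
      push_cast
      linear_combination hty
    have := cast_inj' hm (show t + 1 < m by omega) hm (add_left_cancel h1)
    omega
  have stepA : H n p (y + 1)
      = ((Finset.range n).filter (fun i => p i = y + 1)).card
        + ((Finset.range n).filter (fun i =>
            (∃ t : ℕ, t ≤ offs p i ∧ p i + (t : ZMod m) = y)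
              ∧ ¬ spot (occs p i) (p i) = y)).card := by
    rw [H, Finset.filter_congr key, Finset.filter_or,
      Finset.card_union_of_disjoint]
    rw [Finset.disjoint_left]
    intro a ha hb
    rw [Finset.mem_filter] at ha hb
    exact disj a ha.1 ⟨ha.2, hb.2⟩
  -- Step B : split H y
  have stepB : H n p y
      = ((Finset.range n).filter (fun i => spot (occs p i) (p i) = y)).card
        + ((Finset.range n).filter (fun i =>
            (∃ t : ℕ, t ≤ offs p i ∧ p i + (t : ZMod m) = y)
              ∧ ¬ spot (occs p i) (p i) = y)).card := by
    rw [H]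
    rw [← Finset.card_filter_add_card_filter_not
      (p := fun i => spot (occs p i) (p i) = y)]
    congr 1
    · rw [Finset.filter_filter]
      congr 1
      apply Finset.filter_congr
      intro i hi
      rw [Finset.mem_range] at hi
      obtain ⟨hs, -, -, -⟩ := offs_spec hnm p hi
      constructor
      · rintro ⟨-, h⟩; exact h
      · intro h; exact ⟨⟨offs p i, le_refl _, by rw [← hs, h]⟩, h⟩
    · rw [Finset.filter_filter]
  rw [stepA, stepB, parked_card hnm p y]
  have hH0 := H_eq_zero_iff hnm p y
  rw [stepB, parked_card hnm p y] at hH0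
  split_ifs at hH0 ⊢ with h
  · omega
  · have hB := hH0.mpr h
    omega


noncomputable def S (n : ℕ) (p : ℕ → ZMod m) (a : ℕ) : ℤ :=
  ∑ j ∈ Finset.range a, (Y n p (j + 1) : ℤ)

noncomputable def T (n : ℕ) (p : ℕ → ZMod m) (a : ℕ) : ℤ := S n p a - a

lemma Y_congr {n : ℕ} {p : ℕ → ZMod m} {a b : ℤ} (h : (a : ZMod m) = (b : ZMod m)) :
    Y n p a = Y n p b := by
  rw [Y, Y, h]

lemma sum_Y_window (hm : 0 < m) (n : ℕ) (p : ℕ → ZMod m) (b : ℕ) :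
    ∑ j ∈ Finset.range m, (Y n p (((b + j + 1 : ℕ) : ℤ)) : ℤ) = n := by
  haveI : NeZero m := ⟨hm.ne'⟩
  have hcard : ∑ c : ZMod m, (((Finset.range n).filter (fun i => p i = c)).card : ℤ)
      = (n : ℤ) := by
    rw [← Nat.cast_sum]
    norm_cast
    conv_rhs => rw [← Finset.card_range n]
    exact (Finset.card_eq_sum_card_fiberwise (fun i _ => Finset.mem_univ (p i))).symm
  rw [← hcard]
  refine Finset.sum_nbij' (fun j => ((b + j + 1 : ℕ) : ZMod m))
    (fun c => ((c - ((b + 1 : ℕ) : ZMod m)).val)) ?_ ?_ ?_ ?_ ?_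
  · intro j _; exact Finset.mem_univ _
  · intro c _; exact Finset.mem_range.mpr (ZMod.val_lt _)
  · intro j hj
    rw [Finset.mem_range] at hj
    show ((((b + j + 1 : ℕ) : ZMod m)) - ((b + 1 : ℕ) : ZMod m)).val = j
    have : ((b + j + 1 : ℕ) : ZMod m) - ((b + 1 : ℕ) : ZMod m) = (j : ZMod m) := by
      push_cast; ring
    rw [this, ZMod.val_natCast_of_lt hj]
  · intro c _
    show ((b + (c - ((b + 1 : ℕ) : ZMod m)).val + 1 : ℕ) : ZMod m) = c
    rw [Nat.cast_add, Nat.cast_add, ZMod.natCast_val]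
    push_cast [ZMod.cast_id]
    ring
  · intro j _
    simp only [Y]
    norm_cast

lemma S_add_m (hm : 0 < m) (n : ℕ) (p : ℕ → ZMod m) (a : ℕ) :
    S n p (a + m) = S n p a + n := by
  rw [S, S, Finset.sum_range_add]
  congr 1
  have := sum_Y_window hm n p a
  rw [← this]
  apply Finset.sum_congr rfl
  intro j _
  congr 1

lemma S_eq (hm : 0 < m) (n : ℕ) (p : ℕ → ZMod m) (a : ℕ) :
    S n p a = (a / m : ℕ) * n + S n p (a % m) := by
  have key : ∀ q r : ℕ, S n p (q * m + r) = q * n + S n p r := by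
    intro q
    induction q with
    | zero => intro r; simp
    | succ q ih =>
      intro r
      have h1 : (q + 1) * m + r = (q * m + r) + m := by ring
      rw [h1, S_add_m hm n p, ih r]
      push_cast
      ring
  conv_lhs => rw [← Nat.div_add_mod a m, Nat.mul_comm]
  rw [key (a / m) (a % m)]

lemma T_add_m (hm : 0 < m) {n : ℕ} (hnm : n < m) (p : ℕ → ZMod m) (a : ℕ) :
    T n p (a + m) = T n p a - ((m : ℤ) - n) := by
  rw [T, T, S_add_m hm n p]
  push_cast
  ring

lemma C_natCast (hm : 0 < m) (n : ℕ) (p : ℕ → ZMod m) (a : ℕ) :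
    C n p (a : ℤ) = T n p a := by
  have h1 : ((a : ℤ).emod m).toNat = a % m := by
    show ((a : ℤ) % (m : ℤ)).toNat = a % m
    omega
  have h2 : (a : ℤ).ediv m = ((a / m : ℕ) : ℤ) := by
    show (a : ℤ) / (m : ℤ) = ((a / m : ℕ) : ℤ)
    omega
  rw [C, h1, h2]
  have h3 : (∑ j ∈ Finset.range (a % m), (Y n p (j + 1) : ℤ)) = S n p (a % m) := rfl
  rw [h3, T, S_eq hm n p a]
  have h4 : (a : ℤ) = (m : ℤ) * ((a / m : ℕ) : ℤ) + ((a % m : ℕ) : ℤ) := by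
    have h5 := Nat.div_add_mod a m
    exact_mod_cast congrArg (Nat.cast : ℕ → ℤ) h5.symm
  rw [h4]
  push_cast
  ring

lemma T_succ_sub (n : ℕ) (p : ℕ → ZMod m) (a : ℕ) :
    T n p (a + 1) - T n p a = (Y n p ((a : ℤ) + 1) : ℤ) - 1 := by
  rw [T, T, S, S, Finset.sum_range_succ]
  push_cast
  ring

lemma Hz_rec {n : ℕ} (hnm : n < m) (p : ℕ → ZMod m) (w k : ℕ) :
    (H n p ((w + (k + 1) : ℕ) : ZMod m) : ℤ)
      = max (T n p (w + k + 1) - T n p (w + k) + 1)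
          ((H n p ((w + k : ℕ) : ZMod m) : ℤ) + (T n p (w + k + 1) - T n p (w + k) + 1) - 1) := by
  have hy : ((w + (k + 1) : ℕ) : ZMod m) = ((w + k : ℕ) : ZMod m) + 1 := by push_cast; ring
  rw [hy, H_succ hnm p ((w + k : ℕ) : ZMod m)]
  have hY : ((Finset.range n).filter (fun i => p i = ((w + k : ℕ) : ZMod m) + 1)).card
      = Y n p ((w + k : ℤ) + 1) := by
    rw [Y]
    congr 1
    apply Finset.filter_congr
    intro i _
    have : (((w + k : ℤ) + 1 : ℤ) : ZMod m) = ((w + k : ℕ) : ZMod m) + 1 := by push_cast; ring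
    rw [this]
  have hT := T_succ_sub n p (w + k)
  have hcast : ((w + k : ℕ) : ℤ) = (w : ℤ) + k := by push_cast; ring
  rw [hcast] at hT
  rw [hY]
  rcases Nat.eq_zero_or_pos (H n p ((w + k : ℕ) : ZMod m)) with h0 | hpos
  · rw [max_eq_left (by omega)]
    omega
  · rw [max_eq_right (by omega)]
    omega

lemma H_formula {n : ℕ} (hnm : n < m) (p : ℕ → ZMod m) (w : ℕ)
    (hw : H n p ((w : ℕ) : ZMod m) = 0) (k : ℕ) :
    (∀ j < k, T n p (w + k) - T n p (w + j) + 1 ≤ (H n p ((w + k : ℕ) : ZMod m) : ℤ))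
    ∧ (H n p ((w + k : ℕ) : ZMod m) = 0
        ∨ ∃ j < k, (H n p ((w + k : ℕ) : ZMod m) : ℤ) = T n p (w + k) - T n p (w + j) + 1) := by
  induction k with
  | zero =>
    constructor
    · intro j hj; omega
    · left; simpa using hw
  | succ k ih =>
    obtain ⟨ih1, ih2⟩ := ih
    have hrec := Hz_rec hnm p w k
    constructor
    · intro j hj
      rcases Nat.lt_or_ge j k with hjk | hjk
      · have h1 := ih1 j hjk
        have h2 : (H n p ((w + k : ℕ) : ZMod m) : ℤ) + (T n p (w + k + 1) - T n p (w + k) + 1) - 1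
            ≤ (H n p ((w + (k + 1) : ℕ) : ZMod m) : ℤ) := by
          rw [hrec]; exact le_max_right _ _
        have h3 : w + (k + 1) = w + k + 1 := by ring
        rw [h3] at h2 ⊢
        linarith
      · have hjk' : j = k := by omega
        subst hjk'
        have h2 : T n p (w + j + 1) - T n p (w + j) + 1
            ≤ (H n p ((w + (j + 1) : ℕ) : ZMod m) : ℤ) := by
          rw [hrec]; exact le_max_left _ _
        have h3 : w + (j + 1) = w + j + 1 := by ring
        rw [h3] at h2 ⊢
        linarith
    · rcases ih2 with h0 | ⟨j0, hj0, heq⟩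
      · right
        refine ⟨k, by omega, ?_⟩
        have h3 : w + (k + 1) = w + k + 1 := by ring
        rw [h3] at hrec ⊢
        rw [hrec, h0, max_eq_left (by push_cast; omega)]
      · right
        rcases max_choice (T n p (w + k + 1) - T n p (w + k) + 1)
          ((H n p ((w + k : ℕ) : ZMod m) : ℤ) + (T n p (w + k + 1) - T n p (w + k) + 1) - 1)
          with hmx | hmx
        · refine ⟨k, by omega, ?_⟩
          have h3 : w + (k + 1) = w + k + 1 := by ring
          rw [h3] at hrec ⊢
          rw [hrec, hmx]
        · refine ⟨j0, by omega, ?_⟩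
          have h3 : w + (k + 1) = w + k + 1 := by ring
          rw [h3] at hrec ⊢
          rw [hrec, hmx, heq]
          ring

lemma record_iff {n : ℕ} (hnm : n < m) (p : ℕ → ZMod m) (w : ℕ)
    (hw : H n p ((w : ℕ) : ZMod m) = 0) (k : ℕ) :
    H n p ((w + k : ℕ) : ZMod m) = 0 ↔ ∀ j < k, T n p (w + k) < T n p (w + j) := by
  obtain ⟨hub, hcase⟩ := H_formula hnm p w hw k
  constructor
  · intro h0 j hj
    have := hub j hj
    rw [h0] at this
    push_cast at this
    omega
  · intro hrecd
    rcases hcase with h | ⟨j, hj, heq⟩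
    · exact h
    · have h1 := hrecd j hj
      have h2 : (H n p ((w + k : ℕ) : ZMod m) : ℤ) ≤ 0 := by omega
      omega

lemma A_eq (hm : 0 < m) (n : ℕ) (p : ℕ → ZMod m) (a : ℕ) :
    A n p a = (T n p a : ℝ) + (a : ℝ) * ((m : ℝ) - n) / m := by
  have hm' : (m : ℝ) ≠ 0 := by positivity
  rw [A, T, S]
  push_cast
  field_simp
  ring

lemma V_spec (h1 : 1 ≤ n) (hnm : n < m) (p : ℕ → ZMod m) :
    (1 ≤ V n p ∧ V n p ≤ m ∧ ∀ i, 1 ≤ i → i ≤ m → A n p (V n p) ≤ A n p i)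
      ∧ ∀ i, 1 ≤ i → i < V n p → A n p (V n p) < A n p i := by
  have hm : 0 < m := by omega
  have hne : (Finset.Icc 1 m).Nonempty := ⟨1, Finset.mem_Icc.mpr ⟨le_refl _, hm⟩⟩
  obtain ⟨b, hb, hmin⟩ := Finset.exists_min_image (Finset.Icc 1 m) (A n p) hne
  rw [Finset.mem_Icc] at hb
  have hset : V n p ∈ {j | 1 ≤ j ∧ j ≤ m ∧ ∀ i, 1 ≤ i → i ≤ m → A n p j ≤ A n p i} := by
    rw [V]
    apply Nat.sInf_mem
    exact ⟨b, hb.1, hb.2, fun i hi1 him => hmin i (Finset.mem_Icc.mpr ⟨hi1, him⟩)⟩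
  simp only [Set.mem_setOf_eq] at hset
  obtain ⟨hV1, hVm, hVmin⟩ := hset
  refine ⟨⟨hV1, hVm, hVmin⟩, ?_⟩
  intro i hi1 hiV
  by_contra hcon
  push_neg at hcon
  have hi_mem : i ∈ {j | 1 ≤ j ∧ j ≤ m ∧ ∀ i, 1 ≤ i → i ≤ m → A n p j ≤ A n p i} := by
    simp only [Set.mem_setOf_eq]
    exact ⟨hi1, by omega, fun i' h1' h2' => le_trans hcon (hVmin i' h1' h2')⟩
  have hVle : V n p ≤ i := by rw [V]; exact Nat.sInf_le hi_mem
  omega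

lemma T_lt {n : ℕ} (h1 : 1 ≤ n) (hnm : n < m) (p : ℕ → ZMod m) {r : ℕ}
    (hr1 : 1 ≤ r) (hrm : r ≤ m) :
    (r < V n p → T n p (V n p) < T n p r)
    ∧ (V n p < r → T n p (V n p) - ((m : ℤ) - n) < T n p r) := by
  obtain ⟨⟨hV1, hVm, hVmin⟩, hVstrict⟩ := V_spec h1 hnm p
  have hm : 0 < m := by omega
  have hmR : (0 : ℝ) < m := by positivity
  have hlR : (0 : ℝ) < (m : ℝ) - n := by
    have : (n : ℝ) < m := by exact_mod_cast hnm
    linarith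
  constructor
  · intro hrV
    have hA : A n p (V n p) < A n p r := hVstrict r hr1 hrV
    rw [A_eq hm, A_eq hm] at hA
    have hrVle : (r : ℝ) ≤ (V n p : ℝ) := by exact_mod_cast hrV.le
    have hkey : (r : ℝ) * ((m : ℝ) - n) / m ≤ (V n p : ℝ) * ((m : ℝ) - n) / m := by
      gcongr
    have hTR : (T n p (V n p) : ℝ) < (T n p r : ℝ) := by linarith
    exact_mod_cast hTR
  · intro hVr
    have hA : A n p (V n p) ≤ A n p r := hVmin r hr1 hrm
    rw [A_eq hm, A_eq hm] at hA
    have hrV' : (r : ℝ) - (V n p : ℝ) ≤ (m : ℝ) - 1 := by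
      have h2 : (r : ℝ) ≤ m := by exact_mod_cast hrm
      have h3 : (1 : ℝ) ≤ (V n p : ℝ) := by exact_mod_cast hV1
      linarith
    have hkey : ((r : ℝ) - (V n p : ℝ)) * ((m : ℝ) - n) / m < (m : ℝ) - n := by
      rw [div_lt_iff₀ hmR]
      have h4 : (r : ℝ) - (V n p : ℝ) < m := by linarith
      nlinarith
    have hTR : (T n p (V n p) : ℝ) - ((m : ℝ) - n) < (T n p r : ℝ) := by
      have hexp : ((r : ℝ) - (V n p : ℝ)) * ((m : ℝ) - n) / m
          = (r : ℝ) * ((m : ℝ) - n) / m - (V n p : ℝ) * ((m : ℝ) - n) / m := by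
        ring
      rw [hexp] at hkey
      linarith
    exact_mod_cast hTR

lemma HV_zero {n : ℕ} (h1 : 1 ≤ n) (hnm : n < m) (p : ℕ → ZMod m) :
    H n p ((V n p : ℕ) : ZMod m) = 0 := by
  have hm : 0 < m := by omega
  haveI : NeZero m := ⟨by omega⟩
  obtain ⟨e, he⟩ : ∃ e : ZMod m, e ∉ occs p n := by
    by_contra hc; push_neg at hc
    have hsub : Finset.univ ⊆ occs p n := fun x _ => hc x
    have := Finset.card_le_card hsub
    rw [Finset.card_univ, ZMod.card, occs_card hm p n (by omega)] at this
    omega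
  set w : ℕ := if e.val = 0 then m else e.val with hw_def
  have hvlt : e.val < m := ZMod.val_lt e
  have hw1 : 1 ≤ w := by rw [hw_def]; split_ifs <;> omega
  have hwm : w ≤ m := by rw [hw_def]; split_ifs <;> omega
  have hwe : ((w : ℕ) : ZMod m) = e := by
    rw [hw_def]; split_ifs with h
    · rw [ZMod.natCast_self]
      exact ((ZMod.val_eq_zero e).mp h).symm
    · rw [ZMod.natCast_val, ZMod.cast_id]
  have hw0 : H n p ((w : ℕ) : ZMod m) = 0 := by
    rw [hwe, H_eq_zero_iff hnm p]; exact he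
  obtain ⟨⟨hV1, hVm, -⟩, -⟩ := V_spec h1 hnm p
  rcases le_or_gt w (V n p) with hcase | hcase
  · have hk : V n p = w + (V n p - w) := by omega
    rw [hk, record_iff hnm p w hw0 (V n p - w)]
    intro j hj
    have h5 : w + (V n p - w) = V n p := by omega
    rw [h5]
    exact (T_lt h1 hnm p (show 1 ≤ w + j by omega) (show w + j ≤ m by omega)).1 (by omega)
  · have hresidue : ((w + (V n p + m - w) : ℕ) : ZMod m) = ((V n p : ℕ) : ZMod m) := by
      have h6 : w + (V n p + m - w) = V n p + m := by omega
      rw [h6]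
      push_cast [ZMod.natCast_self]
      ring
    rw [← hresidue, record_iff hnm p w hw0 _]
    intro j hj
    have h5 : w + (V n p + m - w) = V n p + m := by omega
    rw [h5, T_add_m hm hnm p (V n p)]
    rcases le_or_gt (w + j) m with hc2 | hc2
    · exact (T_lt h1 hnm p (show 1 ≤ w + j by omega) hc2).2 (by omega)
    · have h6 : w + j = (w + j - m) + m := by omega
      rw [h6, T_add_m hm hnm p (w + j - m)]
      have h7 : T n p (V n p) < T n p (w + j - m) :=
        (T_lt h1 hnm p (show 1 ≤ w + j - m by omega)
          (show w + j - m ≤ m by omega)).1 (by omega)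
      omega

/-- The place `V + k` is empty at the end of the parking process if and only if `−C` has a
strict record at `V + k`, i.e. `C_{V+k} < C_{V+j}` for all `0 ≤ j ≤ k − 1`. -/
theorem place_empty_iff_record
    (m n : ℕ) (h1 : 1 ≤ n) (h2 : n < m) (p : ℕ → ZMod m)
    (k : ℕ) (hk : k ∈ Finset.Icc 1 (m - 1)) :
    H n p (((V n p + k : ℕ)) : ZMod m) = 0
      ↔ ∀ j : ℕ, j < k → C n p ((V n p : ℤ) + k) < C n p ((V n p : ℤ) + j) := by
  have hm : 0 < m := by omega
  have hconv : ∀ a : ℕ, C n p ((V n p : ℤ) + a) = T n p (V n p + a) := by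
    intro a
    have hcast : ((V n p : ℤ) + a) = ((V n p + a : ℕ) : ℤ) := by push_cast; ring
    rw [hcast, C_natCast hm]
  rw [record_iff h2 p (V n p) (HV_zero h1 h2 p) k]
  constructor
  · intro h j hj
    rw [hconv k, hconv j]
    exact h j hj
  · intro h j hj
    have := h j hj
    rwa [hconv k, hconv j] at this
end Parking
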